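/- arXiv:1005.5047 — 4 statements merged into one kernel-verified Lean document; each statement's English description precedes it below -/
import Mathlib

section
/- Let ν : ℝ → ℂ be continuous, integrable, with ∫_ℝ |ν(μ)| |μ| dμ < ∞. Define α(λ) = exp(∫_ℝ ν(μ)/(μ−λ) dμ) for λ ∈ ℂ with Im λ > 0. Then α(λ) = 1 + α₁/λ + O(1/λ²) as |λ| → ∞ along the ray λ = it, t → +∞, where α₁ = −∫_ℝ ν(μ) dμ. -/
open Real Complex MeasureTheory Filter

theorem alpha_asymptotics (ν : ℝ → ℂ) (hcont : Continuous ν)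
    (hint : Integrable ν)
    (hint1 : Integrable (fun μ : ℝ => ‖ν μ‖ * |μ|))
    (α : ℂ → ℂ)
    (hα : ∀ lam : ℂ, 0 < lam.im →
      α lam = Complex.exp (∫ μ : ℝ, ν μ / (μ - lam)))
    (α₁ : ℂ) (hα₁ : α₁ = -∫ μ : ℝ, ν μ) :
    ∃ C : ℝ, ∃ T : ℝ, 0 < T ∧ ∀ t : ℝ, T ≤ t →
      ‖(t : ℂ)^2 * (α (Complex.I * t) - 1 - α₁ / (Complex.I * t))‖ ≤ C := by
  set N : ℝ := ∫ μ : ℝ, ‖ν μ‖ with hN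
  set M : ℝ := ∫ μ : ℝ, ‖ν μ‖ * |μ| with hM
  have hN0 : 0 ≤ N := integral_nonneg fun μ => norm_nonneg _
  refine ⟨N ^ 2 + M, max 1 N, lt_of_lt_of_le one_pos (le_max_left _ _), ?_⟩
  intro t ht
  have ht1 : (1 : ℝ) ≤ t := le_trans (le_max_left _ _) ht
  have ht0 : (0 : ℝ) < t := lt_of_lt_of_le one_pos ht1
  have hNt : N ≤ t := le_trans (le_max_right _ _) ht
  have hz : ∀ μ : ℝ, ((μ : ℂ) - Complex.I * t) ≠ 0 := by
    intro μ h
    have h2 := congrArg Complex.im h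
    simp at h2
    linarith
  have hit : (Complex.I * (t : ℂ)) ≠ 0 := by
    simp [Complex.ext_iff]
    linarith
  have habs : ∀ μ : ℝ, t ≤ ‖(μ : ℂ) - Complex.I * t‖ := by
    intro μ
    have := Complex.abs_im_le_norm ((μ : ℂ) - Complex.I * t)
    simp only [Complex.sub_im, Complex.ofReal_im, Complex.mul_im, Complex.I_re,
      Complex.I_im, Complex.ofReal_re, Complex.ofReal_im] at this
    calc t = |(0 : ℝ) - (0 * 0 + 1 * t)| := by simp [_root_.abs_of_nonneg ht0.le]
    _ ≤ _ := this
  have habsit : ‖Complex.I * (t : ℂ)‖ = t := by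
    simp [abs_of_pos ht0]
  -- integrabilities
  have hm1 : Integrable (fun μ : ℝ => ν μ / ((μ : ℂ) - Complex.I * t)) := by
    refine Integrable.mono' (hint.norm.div_const t)
      ((hcont.div (by continuity) hz).aestronglyMeasurable) ?_
    filter_upwards with μ
    rw [norm_div]
    gcongr
    exact habs μ
  have hm2 : Integrable (fun μ : ℝ =>
      ν μ * μ / (Complex.I * t * ((μ : ℂ) - Complex.I * t))) := by
    refine Integrable.mono' (hint1.div_const (t * t))
      (((hcont.mul Complex.continuous_ofReal).div (by continuity)
        (fun μ => mul_ne_zero hit (hz μ))).aestronglyMeasurable) ?_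
    filter_upwards with μ
    rw [norm_div, norm_mul, norm_mul, habsit, Complex.norm_real, Real.norm_eq_abs]
    have h1 : (0:ℝ) < t * t := by positivity
    have h2 : t * t ≤ t * ‖(μ : ℂ) - Complex.I * t‖ := mul_le_mul_of_nonneg_left (habs μ) ht0.le
    exact div_le_div_of_nonneg_left (by positivity) h1 h2
  set g : ℂ := ∫ μ : ℝ, ν μ / ((μ : ℂ) - Complex.I * t) with hg
  set r : ℂ := ∫ μ : ℝ, ν μ * μ / (Complex.I * t * ((μ : ℂ) - Complex.I * t)) with hr
  have hsplit : g - r = α₁ / (Complex.I * t) := by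
    rw [hg, hr, ← integral_sub hm1 hm2]
    have hpt : ∀ μ : ℝ, ν μ / ((μ : ℂ) - Complex.I * t) -
        ν μ * μ / (Complex.I * t * ((μ : ℂ) - Complex.I * t)) =
        ν μ * (-(Complex.I * t)⁻¹) := by
      intro μ
      have h1 := hz μ
      have h2 : (t : ℂ) ≠ 0 := by exact_mod_cast ht0.ne'
      field_simp
      ring
    simp_rw [hpt]
    rw [integral_mul_const, hα₁]
    field_simp
  have hgb : ‖g‖ ≤ N / t := by
    have heq : N / t = ∫ μ : ℝ, ‖ν μ‖ / t := by rw [hN, integral_div]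
    rw [hg, heq]
    refine norm_integral_le_of_norm_le (hint.norm.div_const t) ?_
    filter_upwards with μ
    rw [norm_div]
    gcongr
    exact habs μ
  have hrb : ‖r‖ ≤ M / (t * t) := by
    have heq : M / (t * t) = ∫ μ : ℝ, (‖ν μ‖ * |μ|) / (t * t) := by
      rw [hM, integral_div]
    rw [hr, heq]
    refine norm_integral_le_of_norm_le (hint1.div_const (t * t)) ?_
    filter_upwards with μ
    rw [norm_div, norm_mul, norm_mul, habsit, Complex.norm_real, Real.norm_eq_abs]
    have h1 : (0:ℝ) < t * t := by positivity
    have h2 : t * t ≤ t * ‖(μ : ℂ) - Complex.I * t‖ :=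
      mul_le_mul_of_nonneg_left (habs μ) ht0.le
    exact div_le_div_of_nonneg_left (by positivity) h1 h2
  have hg1 : ‖g‖ ≤ 1 := hgb.trans (by rw [div_le_one ht0]; exact hNt)
  have hexp : ‖Complex.exp g - 1 - g‖ ≤ ‖g‖ ^ 2 := by
    have := Complex.norm_exp_sub_one_sub_id_le (by simpa using hg1)
    simpa using this
  have him : (0:ℝ) < (Complex.I * (t : ℂ)).im := by simpa using ht0
  rw [hα _ him]
  have hge : (∫ μ : ℝ, ν μ / ((μ:ℝ) - Complex.I * (t:ℝ))) = g := rfl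
  rw [hge]
  have key : Complex.exp g - 1 - α₁ / (Complex.I * t) = (Complex.exp g - 1 - g) + r := by
    rw [← hsplit]; ring
  rw [key, norm_mul]
  have hnt : ‖((t : ℂ)) ^ 2‖ = t ^ 2 := by
    rw [norm_pow, Complex.norm_real, Real.norm_eq_abs]; exact _root_.sq_abs t
  rw [hnt]
  have hbound : ‖(Complex.exp g - 1 - g) + r‖ ≤ (N / t) ^ 2 + M / (t * t) := by
    refine (norm_add_le _ _).trans ?_
    exact add_le_add (hexp.trans (pow_le_pow_left₀ (norm_nonneg _) hgb 2)) hrb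
  calc t ^ 2 * ‖(Complex.exp g - 1 - g) + r‖
      ≤ t ^ 2 * ((N / t) ^ 2 + M / (t * t)) :=
        mul_le_mul_of_nonneg_left hbound (by positivity)
    _ = N ^ 2 + M := by field_simp
end

section
/- Let 0 < ζ < π with π/ζ irrational, and F(λ) = sinh(λ(π/2−ζ))/sinh(λπ/2) (extended continuously at zeros of the denominator where the limit exists). The solutions of 1 + F(λ) = 0 in the open upper half-plane are exactly the points λ = 2πi(j+1)/(π−ζ) and λ = πi(2j+1)/ζ for integers j ≥ 0, excluding any such point where sinh(λπ/2) = 0. -/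
open Real Complex

lemma sinh_add_sinh' (x y : ℂ) :
    Complex.sinh x + Complex.sinh y =
      2 * Complex.sinh ((x + y) / 2) * Complex.cosh ((x - y) / 2) := by
  have h1 := Complex.sinh_add ((x + y) / 2) ((x - y) / 2)
  have h2 := Complex.sinh_sub ((x + y) / 2) ((x - y) / 2)
  have e1 : (x + y) / 2 + (x - y) / 2 = x := by ring
  have e2 : (x + y) / 2 - (x - y) / 2 = y := by ring
  rw [e1] at h1; rw [e2] at h2
  linear_combination h1 + h2

lemma sinh_eq_zero' (z : ℂ) :
    Complex.sinh z = 0 ↔ ∃ k : ℤ, z = k * π * Complex.I := by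
  have h := Complex.sin_mul_I z
  constructor
  · intro hz
    have : Complex.sin (z * Complex.I) = 0 := by rw [h, hz, zero_mul]
    obtain ⟨k, hk⟩ := Complex.sin_eq_zero_iff.mp this
    refine ⟨-k, ?_⟩
    have := congrArg (· * (-Complex.I)) hk
    rw [mul_assoc, mul_neg, Complex.I_mul_I, neg_neg, mul_one] at this
    rw [this]; push_cast; ring_nf
  · rintro ⟨k, rfl⟩
    have : Complex.sin ((k : ℂ) * π * Complex.I * Complex.I) = 0 := by
      rw [mul_assoc, Complex.I_mul_I]
      refine Complex.sin_eq_zero_iff.mpr ⟨-k, by push_cast; ring⟩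
    rw [h] at this
    simpa [Complex.I_ne_zero] using this

lemma cosh_eq_zero' (z : ℂ) :
    Complex.cosh z = 0 ↔ ∃ k : ℤ, z = (2 * k + 1) * π / 2 * Complex.I := by
  have h := Complex.cos_mul_I z
  constructor
  · intro hz
    have : Complex.cos (z * Complex.I) = 0 := by rw [h, hz]
    obtain ⟨k, hk⟩ := Complex.cos_eq_zero_iff.mp this
    refine ⟨-k - 1, ?_⟩
    have := congrArg (· * (-Complex.I)) hk
    rw [mul_assoc, mul_neg, Complex.I_mul_I, neg_neg, mul_one] at this
    rw [this]; push_cast; ring_nf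
  · rintro ⟨k, rfl⟩
    have : Complex.cos ((2 * (k : ℂ) + 1) * π / 2 * Complex.I * Complex.I) = 0 := by
      rw [mul_assoc, Complex.I_mul_I]
      refine Complex.cos_eq_zero_iff.mpr ⟨-k - 1, by push_cast; ring⟩
    rwa [h] at this

theorem roots_XXZ (ζ : ℝ) (hζ : 0 < ζ) (hζπ : ζ < π)
    (hirr : Irrational (π / ζ)) :
    ∀ lam : ℂ, 0 < lam.im →
      ((Complex.sinh (lam * π / 2) ≠ 0 ∧
          1 + Complex.sinh (lam * (π / 2 - ζ)) / Complex.sinh (lam * π / 2) = 0) ↔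
        ((∃ j : ℕ,
            lam = 2 * π * Complex.I * (j + 1) / ((π : ℂ) - ζ) ∨
            lam = π * Complex.I * (2 * j + 1) / (ζ : ℂ)) ∧
          Complex.sinh (lam * π / 2) ≠ 0)) := by
  intro lam him
  have hπζR : (0:ℝ) < π - ζ := by linarith
  have hπζ : ((π : ℂ) - ζ) ≠ 0 := by
    rw [show ((π:ℂ) - ζ) = ((π - ζ : ℝ) : ℂ) by push_cast; ring]
    exact_mod_cast hπζR.ne'
  have hζC : (ζ : ℂ) ≠ 0 := by exact_mod_cast hζ.ne'
  have hπ0 : (0:ℝ) < π := Real.pi_pos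
  -- sum-to-product form
  have key : ∀ _ : Complex.sinh (lam * π / 2) ≠ 0,
      (1 + Complex.sinh (lam * (π / 2 - ζ)) / Complex.sinh (lam * π / 2) = 0 ↔
        Complex.sinh (lam * π / 2) + Complex.sinh (lam * (π / 2 - ζ)) = 0) := by
    intro hs
    rw [← div_self hs, ← add_div, div_eq_zero_iff, or_iff_left hs]
  have hsum : Complex.sinh (lam * π / 2) + Complex.sinh (lam * (π / 2 - ζ)) =
      2 * Complex.sinh (lam * ((π : ℂ) - ζ) / 2) * Complex.cosh (lam * ζ / 2) := by
    rw [sinh_add_sinh']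
    congr 2
    · ring
    · ring
  constructor
  · rintro ⟨hs, heq⟩
    refine ⟨?_, hs⟩
    have h0 : Complex.sinh (lam * ((π : ℂ) - ζ) / 2) = 0 ∨
        Complex.cosh (lam * ζ / 2) = 0 := by
      have := (key hs).mp heq
      rw [hsum] at this
      rcases mul_eq_zero.mp this with h | h
      · rcases mul_eq_zero.mp h with h | h
        · exact absurd h two_ne_zero
        · exact Or.inl h
      · exact Or.inr h
    rcases h0 with h | h
    · obtain ⟨k, hk⟩ := (sinh_eq_zero' _).mp h
      have hlam : lam = 2 * k * π * Complex.I / ((π : ℂ) - ζ) := by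
        field_simp at hk ⊢
        linear_combination hk
      have himv : lam.im * (π - ζ) = 2 * k * π := by
        have h2 : lam * ((π : ℂ) - ζ) = 2 * k * π * Complex.I := by
          rw [hlam]; field_simp
        have := congrArg Complex.im h2
        simpa [Complex.mul_im] using this
      have hkpos : 0 < (k : ℝ) := by
        nlinarith [mul_pos him hπζR]
      have hk1 : 1 ≤ k := by exact_mod_cast hkpos
      refine ⟨(k - 1).toNat, Or.inl ?_⟩
      rw [hlam]
      congr 1
      have : ((k - 1).toNat : ℂ) = (k : ℂ) - 1 := by
        have h3 : ((k - 1).toNat : ℤ) = k - 1 := Int.toNat_of_nonneg (by omega)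
        exact_mod_cast h3
      rw [this]; ring
    · obtain ⟨k, hk⟩ := (cosh_eq_zero' _).mp h
      have hlam : lam = (2 * k + 1) * π * Complex.I / (ζ : ℂ) := by
        field_simp at hk ⊢
        linear_combination hk
      have himv : lam.im * ζ = (2 * k + 1) * π := by
        have h2 : lam * (ζ : ℂ) = (2 * k + 1) * π * Complex.I := by
          rw [hlam]; field_simp
        have := congrArg Complex.im h2
        simpa [Complex.mul_im] using this
      have hkpos : 0 < (2 * (k : ℝ) + 1) := by
        nlinarith [mul_pos him hζ]
      have hk0 : 0 ≤ k := by
        by_contra hneg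
        push_neg at hneg
        have hk' : k ≤ -1 := by omega
        have : (k : ℝ) ≤ -1 := by exact_mod_cast hk'
        linarith
      refine ⟨k.toNat, Or.inr ?_⟩
      rw [hlam]
      congr 1
      have : ((k.toNat : ℂ)) = (k : ℂ) := by
        have h3 : ((k.toNat : ℤ)) = k := Int.toNat_of_nonneg hk0
        exact_mod_cast h3
      rw [this]; ring
  · rintro ⟨⟨j, hj⟩, hs⟩
    refine ⟨hs, (key hs).mpr ?_⟩
    rw [hsum]
    rcases hj with hj | hj
    · have : Complex.sinh (lam * ((π : ℂ) - ζ) / 2) = 0 := by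
        refine (sinh_eq_zero' _).mpr ⟨(j : ℤ) + 1, ?_⟩
        rw [hj]
        field_simp
        push_cast; ring
      rw [this]; ring
    · have : Complex.cosh (lam * ζ / 2) = 0 := by
        refine (cosh_eq_zero' _).mpr ⟨(j : ℤ), ?_⟩
        rw [hj]
        field_simp
        push_cast; ring
      rw [this]; ring
end

section
/- Let n⁺ ≤ n⁻, and let A⁻ be an n⁺×n⁻ matrix with entries A⁻_{jk} = u_k/(q⁺ⱼ − q⁻ₖ) and A⁺ an n⁻×n⁺ matrix with entries A⁺_{kj} = v_j/(q⁻ₖ − q⁺ⱼ), where u_k, v_j ∈ ℂ and all q⁺ⱼ, q⁻ₖ are distinct with q⁺ⱼ ≠ q⁻ₖ. Then det(I − A⁻A⁺) = Σ_{n=0}^{n⁺} Σ_{j₁<⋯<jₙ ≤ n⁺} Σ_{k₁<⋯<kₙ ≤ n⁻} (∏_{a=1}^{n} u_{k_a} v_{j_a}) · (det_{a,b} 1/(q⁺_{j_a} − q⁻_{k_b}))². -/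
open Complex Finset Matrix

open scoped Classical


lemma strictMono_eq_of_image_eq {n m : ℕ} {k k' : Fin n → Fin m}
    (hk : StrictMono k) (hk' : StrictMono k')
    (h : Finset.image k Finset.univ = Finset.image k' Finset.univ) : k = k' := by
  have hcard : (Finset.image k Finset.univ).card = n := by
    rw [Finset.card_image_of_injective _ hk.injective]; simp
  have h1 : k = ⇑((Finset.image k Finset.univ).orderEmbOfFin hcard) :=
    Finset.orderEmbOfFin_unique hcard (fun x => Finset.mem_image_of_mem _ (Finset.mem_univ x)) hk
  have h2 : k' = ⇑((Finset.image k Finset.univ).orderEmbOfFin hcard) :=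
    Finset.orderEmbOfFin_unique hcard
      (fun x => h ▸ Finset.mem_image_of_mem _ (Finset.mem_univ x)) hk'
  rw [h1, h2]

lemma sum_injective_eq {n m : ℕ} (T : (Fin n → Fin m) → ℂ) :
    ∑ p ∈ Finset.univ.filter (fun p : Fin n → Fin m => Function.Injective p), T p
      = ∑ k ∈ Finset.univ.filter (fun k : Fin n → Fin m => StrictMono k),
          ∑ σ : Equiv.Perm (Fin n), T (k ∘ σ) := by
  rw [← Finset.sum_product']
  refine (Finset.sum_bij (fun q _ => q.1 ∘ q.2) ?_ ?_ ?_ ?_).symm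
  · rintro ⟨k, σ⟩ hq
    simp only [Finset.mem_product, Finset.mem_filter, Finset.mem_univ, true_and] at hq ⊢
    exact hq.1.injective.comp σ.injective
  · rintro ⟨k, σ⟩ hq ⟨k', σ'⟩ hq' h
    simp only [Finset.mem_product, Finset.mem_filter, Finset.mem_univ, true_and,
      Finset.mem_univ, and_true] at hq hq'
    have e1 : ∀ (k : Fin n → Fin m) (σ : Equiv.Perm (Fin n)),
        Finset.image (k ∘ σ) Finset.univ = Finset.image k Finset.univ := by
      intro k σ
      rw [← Finset.image_image, Finset.image_univ_equiv]
    have himg : Finset.image k Finset.univ = Finset.image k' Finset.univ := by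
      rw [← e1 k σ, ← e1 k' σ']
      exact congrArg (fun f => Finset.image f Finset.univ) h
    have hk : k = k' := strictMono_eq_of_image_eq hq hq' himg
    subst hk
    have : σ = σ' := by
      ext i
      have := hq.injective (congrFun h i); exact congrArg Fin.val this
    simp [this]
  · intro p hp
    simp only [Finset.mem_filter, Finset.mem_univ, true_and] at hp
    have hcard : (Finset.image p Finset.univ).card = n := by
      rw [Finset.card_image_of_injective _ hp]; simp
    set S := Finset.image p Finset.univ with hS
    let g : Fin n → Fin n := fun i =>
      (S.orderIsoOfFin hcard).symm ⟨p i, Finset.mem_image_of_mem _ (Finset.mem_univ i)⟩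
    have hg : Function.Injective g := by
      intro i i' hii
      apply hp
      have := congrArg (fun x => ((S.orderIsoOfFin hcard) x : Fin m)) hii
      simpa [g] using this
    let σ : Equiv.Perm (Fin n) := Equiv.ofBijective g (Finite.injective_iff_bijective.mp hg)
    refine ⟨⟨⇑(S.orderEmbOfFin hcard), σ⟩, ?_, ?_⟩
    · simp [Finset.mem_product, Finset.mem_filter, (S.orderEmbOfFin hcard).strictMono]
    · funext i
      show (S.orderEmbOfFin hcard) (g i) = p i
      rw [← Finset.coe_orderIsoOfFin_apply]
      simp [g]
  · intro q hq; rfl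


theorem cauchyBinet {n m : ℕ} (B : Matrix (Fin n) (Fin m) ℂ) (C : Matrix (Fin m) (Fin n) ℂ) :
    Matrix.det (B * C) = ∑ k ∈ Finset.univ.filter (fun k : Fin n → Fin m => StrictMono k),
        Matrix.det (B.submatrix id k) * Matrix.det (C.submatrix k id) := by
  have h1 : Matrix.det (B * C)
      = ∑ p : Fin n → Fin m, (∏ i, B i (p i)) * Matrix.det (C.submatrix p id) := by
    have hrow : ((B * C : Matrix (Fin n) (Fin n) ℂ) : Fin n → Fin n → ℂ)
        = fun i => ∑ x : Fin m, B i x • C x := by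
      funext i j
      simp [Matrix.mul_apply, Finset.sum_apply]
    show Matrix.detRowAlternating ((B * C : Matrix (Fin n) (Fin n) ℂ) : Fin n → Fin n → ℂ) = _
    rw [hrow]
    have hs := (Matrix.detRowAlternating (n := Fin n) (R := ℂ)).toMultilinearMap.map_sum
      (g := fun i x => B i x • C x)
    simp only [AlternatingMap.coe_multilinearMap] at hs
    rw [hs]
    refine Finset.sum_congr rfl fun p _ => ?_
    have hsm := (Matrix.detRowAlternating (n := Fin n) (R := ℂ)).toMultilinearMap.map_smul_univ
      (fun i => B i (p i)) (fun i => C (p i))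
    simp only [AlternatingMap.coe_multilinearMap] at hsm
    rw [hsm, smul_eq_mul]
    rfl
  rw [h1, ← Finset.sum_filter_add_sum_filter_not Finset.univ
    (fun p : Fin n → Fin m => Function.Injective p)]
  have h2 : ∑ p ∈ Finset.univ.filter (fun p : Fin n → Fin m => ¬ Function.Injective p),
      (∏ i, B i (p i)) * Matrix.det (C.submatrix p id) = 0 := by
    refine Finset.sum_eq_zero fun p hp => ?_
    replace hp : ¬ Function.Injective p := (Finset.mem_filter.mp hp).2
    simp only [Function.Injective] at hp
    push_neg at hp
    obtain ⟨i, j, hpij, hij⟩ := hp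
    have : Matrix.det (C.submatrix p id) = 0 := by
      refine Matrix.det_zero_of_row_eq hij ?_
      funext b
      simp [Matrix.submatrix_apply, hpij]
    rw [this, mul_zero]
  rw [h2, add_zero, sum_injective_eq]
  refine Finset.sum_congr rfl fun k hk => ?_
  simp only [Finset.mem_filter, Finset.mem_univ, true_and] at hk
  have hBdet : Matrix.det (B.submatrix id k)
      = ∑ σ : Equiv.Perm (Fin n), ((Equiv.Perm.sign σ : ℤ) : ℂ) * ∏ i, B i (k (σ i)) := by
    rw [← Matrix.det_transpose, Matrix.det_apply']
    refine Finset.sum_congr rfl fun σ _ => ?_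
    congr 1
  calc ∑ σ : Equiv.Perm (Fin n), (∏ i, B i (k (σ i))) * Matrix.det (C.submatrix (k ∘ σ) id)
      = ∑ σ : Equiv.Perm (Fin n), (((Equiv.Perm.sign σ : ℤ) : ℂ) * ∏ i, B i (k (σ i)))
          * Matrix.det (C.submatrix k id) := by
        refine Finset.sum_congr rfl fun σ _ => ?_
        have : C.submatrix (k ∘ σ) id = (C.submatrix k id).submatrix σ id := rfl
        rw [this, Matrix.det_permute]
        ring
    _ = _ := by rw [← Finset.sum_mul, ← hBdet]

theorem det_one_sub_expand {N : ℕ} (M : Matrix (Fin N) (Fin N) ℂ) :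
    Matrix.det (1 - M) = ∑ n ∈ Finset.range (N + 1),
      ∑ j ∈ Finset.univ.filter (fun j : Fin n → Fin N => StrictMono j),
        (-1 : ℂ) ^ n * Matrix.det (M.submatrix j j) := by
  set F : Finset (Fin N) → ℂ := fun S =>
    Matrix.det (Matrix.of (S.piecewise (fun i => -(M i))
      (fun i => (1 : Matrix (Fin N) (Fin N) ℂ) i))) with hF
  have hA : Matrix.det (1 - M) = ∑ S : Finset (Fin N), F S := by
    have hrow : ((1 - M : Matrix (Fin N) (Fin N) ℂ) : Fin N → Fin N → ℂ)
        = (fun i => -(M i)) + (fun i => (1 : Matrix (Fin N) (Fin N) ℂ) i) := by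
      funext i j
      simp [Matrix.sub_apply, sub_eq_neg_add]
    show Matrix.detRowAlternating ((1 - M : Matrix (Fin N) (Fin N) ℂ) : Fin N → Fin N → ℂ) = _
    rw [hrow]
    have h := (Matrix.detRowAlternating (n := Fin N) (R := ℂ)).toMultilinearMap.map_add_univ
      (fun i => -(M i)) (fun i => (1 : Matrix (Fin N) (Fin N) ℂ) i)
    simp only [AlternatingMap.coe_multilinearMap] at h
    exact h
  have hkey : ∀ (n : ℕ) (j : Fin n → Fin N), StrictMono j →
      F (Finset.image j Finset.univ) = (-1 : ℂ) ^ n * Matrix.det (M.submatrix j j) := by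
    intro n j hj
    set S := Finset.image j Finset.univ with hS
    have hjm : ∀ a, j a ∈ S := fun a => Finset.mem_image_of_mem _ (Finset.mem_univ a)
    have hcard : S.card = n := by
      rw [hS, Finset.card_image_of_injective _ hj.injective]; simp
    have hn : n ≤ N := by
      rw [← hcard]
      exact le_trans (Finset.card_le_univ S) (by simp)
    have hcardc : Sᶜ.card = N - n := by rw [Finset.card_compl, hcard]; simp
    set k' : Fin (N - n) ↪o Fin N := Sᶜ.orderEmbOfFin hcardc with hk'
    have hk'm : ∀ a, k' a ∉ S := by
      intro a
      have := Finset.orderEmbOfFin_mem Sᶜ hcardc a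
      exact Finset.mem_compl.mp this
    have hinj : Function.Injective (Sum.elim j ⇑k') := by
      rintro (x | x) (y | y) h <;>
        simp only [Sum.elim_inl, Sum.elim_inr] at h
      · exact congrArg Sum.inl (hj.injective h)
      · exact absurd (h ▸ hjm x) (hk'm y)
      · exact absurd (h.symm ▸ hjm y) (hk'm x)
      · exact congrArg Sum.inr (k'.injective h)
    have hbij : Function.Bijective (Sum.elim j ⇑k') := by
      refine (Fintype.bijective_iff_injective_and_card _).mpr ⟨hinj, ?_⟩
      simp only [Fintype.card_sum, Fintype.card_fin]
      omega
    set e : (Fin n ⊕ Fin (N - n)) ≃ Fin N := Equiv.ofBijective _ hbij with he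
    have he1 : ∀ a, e (Sum.inl a) = j a := fun a => rfl
    have he2 : ∀ a, e (Sum.inr a) = k' a := fun a => rfl
    have hdet : F S = Matrix.det ((Matrix.of (S.piecewise (fun i => -(M i))
        (fun i => (1 : Matrix (Fin N) (Fin N) ℂ) i))).submatrix e e) :=
      (Matrix.det_submatrix_equiv_self e _).symm
    have hblocks : (Matrix.of (S.piecewise (fun i => -(M i))
        (fun i => (1 : Matrix (Fin N) (Fin N) ℂ) i))).submatrix e e
        = Matrix.fromBlocks (-(M.submatrix j j))
            (Matrix.of fun a c => -(M (j a) (k' c))) 0 1 := by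
      ext x y
      rcases x with a | a <;> rcases y with b | b
      · simp [Matrix.submatrix_apply, he1, Finset.piecewise, hjm a]
      · simp [Matrix.submatrix_apply, he1, he2, Finset.piecewise, hjm a]
      · have hne : k' a ≠ j b := fun hc => hk'm a (hc ▸ hjm b)
        simp [Matrix.submatrix_apply, he1, he2, Finset.piecewise, hk'm a,
          Matrix.one_apply_ne hne]
      · by_cases hab : a = b
        · subst hab; simp [he2, Finset.piecewise, hk'm a, Matrix.one_apply]
        · have hne : k' a ≠ k' b := fun hc => hab (k'.injective hc)
          simp [he2, Finset.piecewise, hk'm a, Matrix.one_apply_ne hne, Matrix.one_apply_ne hab]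
    rw [hdet, hblocks, Matrix.det_fromBlocks_zero₂₁, Matrix.det_one, mul_one,
      Matrix.det_neg, Fintype.card_fin]
  rw [hA]
  rw [← Finset.powerset_univ, Finset.sum_powerset]
  rw [Finset.card_univ, Fintype.card_fin]
  refine Finset.sum_congr rfl fun n hn => ?_
  refine (Finset.sum_bij (fun (j : Fin n → Fin N) hj => Finset.image j Finset.univ)
    ?_ ?_ ?_ ?_).symm
  · intro j hj
    simp only [Finset.mem_filter, Finset.mem_univ, true_and] at hj
    rw [Finset.mem_powersetCard]
    constructor
    · exact Finset.subset_univ _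
    · rw [Finset.card_image_of_injective _ hj.injective]; simp
  · intro j hj j' hj' h
    simp only [Finset.mem_filter, Finset.mem_univ, true_and] at hj hj'
    exact strictMono_eq_of_image_eq hj hj' h
  · intro S hS
    rw [Finset.mem_powersetCard] at hS
    have hcard : S.card = n := hS.2
    refine ⟨⇑(S.orderEmbOfFin hcard), ?_, ?_⟩
    · simp [Finset.mem_filter, (S.orderEmbOfFin hcard).strictMono]
    · apply Finset.coe_injective
      rw [Finset.coe_image, Finset.coe_univ, Set.image_univ, Finset.range_orderEmbOfFin]
  · intro j hj
    simp only [Finset.mem_filter, Finset.mem_univ, true_and] at hj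
    exact (hkey n j hj).symm


open scoped Classical in
theorem det_expansion (np nm : ℕ) (hle : np ≤ nm)
    (qp : Fin np → ℂ) (qm : Fin nm → ℂ) (u : Fin nm → ℂ) (v : Fin np → ℂ)
    (hqp : Function.Injective qp) (hqm : Function.Injective qm)
    (hne : ∀ j k, qp j ≠ qm k)
    (Am : Matrix (Fin np) (Fin nm) ℂ) (Ap : Matrix (Fin nm) (Fin np) ℂ)
    (hAm : ∀ j k, Am j k = u k / (qp j - qm k))
    (hAp : ∀ k j, Ap k j = v j / (qm k - qp j)) :
    Matrix.det (1 - Am * Ap) =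
      ∑ n ∈ Finset.range (np + 1),
        ∑ j ∈ Finset.univ.filter (fun j : Fin n → Fin np => StrictMono j),
          ∑ k ∈ Finset.univ.filter (fun k : Fin n → Fin nm => StrictMono k),
            (∏ a : Fin n, u (k a) * v (j a)) *
              (Matrix.det (Matrix.of fun a b : Fin n =>
                1 / (qp (j a) - qm (k b)))) ^ 2 := by
  rw [det_one_sub_expand (Am * Ap)]
  refine Finset.sum_congr rfl fun n hn => ?_
  refine Finset.sum_congr rfl fun j hj => ?_
  simp only [Finset.mem_filter, Finset.mem_univ, true_and] at hj
  have hsub : (Am * Ap).submatrix j j = (Am.submatrix j id) * (Ap.submatrix id j) := by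
    ext a b
    simp [Matrix.mul_apply, Matrix.submatrix_apply]
  rw [hsub, cauchyBinet, Finset.mul_sum]
  refine Finset.sum_congr rfl fun k hk => ?_
  simp only [Finset.mem_filter, Finset.mem_univ, true_and] at hk
  have h1 : (Am.submatrix j id).submatrix id k = Am.submatrix j k := rfl
  have h2 : (Ap.submatrix id j).submatrix k id = Ap.submatrix k j := rfl
  rw [h1, h2]
  set D : Matrix (Fin n) (Fin n) ℂ :=
    Matrix.of fun a b => 1 / (qp (j a) - qm (k b)) with hD
  have hAmdet : Matrix.det (Am.submatrix j k) = (∏ a, u (k a)) * Matrix.det D := by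
    have hE : Am.submatrix j k = Matrix.of fun a b => u (k b) * (Dᵀ)ᵀ a b := by
      ext a b
      simp only [Matrix.submatrix_apply, hAm, Matrix.of_apply, Matrix.transpose_apply, hD]
      ring
    rw [hE, ← Matrix.det_transpose]
    have := Matrix.det_mul_column (fun b => u (k b)) (Dᵀ)
    rw [show (Matrix.of fun a b => u (k b) * Dᵀᵀ a b)ᵀ
        = Matrix.of fun a b => u (k a) * Dᵀ a b from by ext a b; rfl]
    rw [this, Matrix.det_transpose]
  have hApdet : Matrix.det (Ap.submatrix k j)
      = (∏ a, v (j a)) * ((-1 : ℂ) ^ n * Matrix.det D) := by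
    have hE : Ap.submatrix k j = Matrix.of fun a b => v (j b) * (-(Dᵀ)) a b := by
      ext a b
      simp only [Matrix.submatrix_apply, hAp, Matrix.of_apply, Matrix.neg_apply,
        Matrix.transpose_apply, hD]
      rw [show qm (k a) - qp (j b) = -(qp (j b) - qm (k a)) from by ring, div_neg]
      ring
    rw [hE, ← Matrix.det_transpose]
    have := Matrix.det_mul_column (fun b => v (j b)) (-(Dᵀ))
    rw [show (Matrix.of fun a b => v (j b) * (-(Dᵀ)) a b)ᵀ
        = Matrix.of fun a b => v (j a) * (-(Dᵀ))ᵀ a b from by ext a b; rfl]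
    rw [show (Matrix.of fun a b => v (j a) * (-Dᵀ)ᵀ a b)
        = Matrix.of fun a b => v (j a) * (-(Dᵀ))ᵀ a b from rfl]
    have hcol := Matrix.det_mul_column (fun b => v (j b)) ((-(Dᵀ))ᵀ)
    rw [hcol, Matrix.det_transpose, Matrix.det_neg, Matrix.det_transpose, Fintype.card_fin]
  rw [hAmdet, hApdet]
  have hsign : (-1 : ℂ) ^ n * (-1 : ℂ) ^ n = 1 := by
    rw [← pow_add, ← two_mul, pow_mul]
    norm_num
  rw [Finset.prod_mul_distrib]
  calc (-1 : ℂ) ^ n * ((∏ a, u (k a)) * Matrix.det D *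
        ((∏ a, v (j a)) * ((-1 : ℂ) ^ n * Matrix.det D)))
      = ((-1 : ℂ) ^ n * (-1 : ℂ) ^ n) *
          ((∏ a, u (k a)) * (∏ a, v (j a)) * Matrix.det D ^ 2) := by ring
    _ = (∏ a, u (k a)) * (∏ a, v (j a)) * Matrix.det D ^ 2 := by rw [hsign, one_mul]
end

section
/- Let ν : ℝ → ℂ be continuous and integrable with ν holomorphic in a neighborhood of ℝ, and assume the boundary values α₊, α₋ of α(λ) = exp(∫_ℝ ν(μ)/(μ−λ)dμ) from the upper and lower half-planes exist and are continuous on ℝ. Then α₋(λ) = α₊(λ) · e^{−2πi ν(λ)} for all λ ∈ ℝ. -/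
open Complex MeasureTheory Filter Topology

-- integrability of ν/(μ - z) for z off real axis
lemma integrable_div_sub (ν : ℝ → ℂ) (hcont : Continuous ν) (hint : Integrable ν)
    (z : ℂ) (hz : z.im ≠ 0) : Integrable (fun μ : ℝ => ν μ / (μ - z)) := by
  simp_rw [div_eq_mul_inv]
  have h := hint.bdd_mul (f := fun μ : ℝ => ((μ : ℂ) - z)⁻¹) (c := |z.im|⁻¹) ?_ ?_
  · simpa [mul_comm] using h
  · exact Measurable.aestronglyMeasurable (by fun_prop)
  · refine ae_of_all _ (fun μ => ?_)
    rw [norm_inv]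
    refine inv_anti₀ (abs_pos.mpr hz) ?_
    calc |z.im| = |((μ : ℂ) - z).im| := by simp
    _ ≤ ‖(μ:ℂ) - z‖ := Complex.abs_im_le_norm _
    _ = ‖(μ:ℂ) - z‖ := rfl

lemma kernel_bdd_mul (ν : ℝ → ℂ) (hint : Integrable ν)
    (lam : ℝ) {ε : ℝ} (hε : 0 < ε) :
    Integrable (fun μ : ℝ => ν μ * ((ε / ((μ - lam)^2 + ε^2) : ℝ) : ℂ)) := by
  have h := hint.bdd_mul (f := fun μ : ℝ => ((ε / ((μ - lam)^2 + ε^2) : ℝ) : ℂ)) (c := ε⁻¹)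
    (Measurable.aestronglyMeasurable (by fun_prop)) ?_
  · simpa [mul_comm] using h
  · refine ae_of_all _ (fun μ => ?_)
    rw [Complex.norm_real]
    have h1 : (0:ℝ) < (μ - lam)^2 + ε^2 := by positivity
    rw [Real.norm_eq_abs, _root_.abs_of_nonneg (show (0:ℝ) ≤ ε / ((μ - lam)^2 + ε^2) by positivity)]
    rw [div_le_iff₀ h1]
    calc ε = ε⁻¹ * ε^2 := by field_simp
    _ ≤ ε⁻¹ * ((μ - lam)^2 + ε^2) := by
        apply mul_le_mul_of_nonneg_left _ (by positivity)
        nlinarith [sq_nonneg (μ - lam)]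

lemma poisson_limit (ν : ℝ → ℂ) (hcont : Continuous ν) (hint : Integrable ν) (lam : ℝ) :
    Tendsto (fun ε : ℝ => ∫ μ : ℝ, ν μ * ((ε / ((μ - lam)^2 + ε^2) : ℝ) : ℂ))
      (𝓝[>] (0:ℝ)) (𝓝 ((Real.pi : ℂ) * ν lam)) := by
  set s : Set ℝ := Set.Icc (lam - 1) (lam + 1) with hs
  have hsm : MeasurableSet s := measurableSet_Icc
  set ν₁ : ℝ → ℂ := s.indicator ν with hν₁
  set ν₂ : ℝ → ℂ := sᶜ.indicator ν with hν₂
  have hν₁m : Measurable ν₁ := hcont.measurable.indicator hsm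
  have hν₂m : Measurable ν₂ := hcont.measurable.indicator hsm.compl
  have hν₁i : Integrable ν₁ := hint.indicator hsm
  have hν₂i : Integrable ν₂ := hint.indicator hsm.compl
  -- bound on ν₁
  obtain ⟨M, hM⟩ : ∃ M : ℝ, ∀ x, ‖ν₁ x‖ ≤ M := by
    obtain ⟨C, hC⟩ := (isCompact_Icc (a := lam - 1) (b := lam + 1)).exists_bound_of_continuousOn
      hcont.continuousOn
    refine ⟨max C 0, fun x => ?_⟩
    by_cases hx : x ∈ s
    · simp only [hν₁, Set.indicator_of_mem hx]
      exact le_trans (hC x hx) (le_max_left _ _)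
    · simp [hν₁, Set.indicator_of_notMem hx]
  -- integrability of ν₁ * K and ν₂ * K
  have hK1 : ∀ {ε : ℝ}, 0 < ε →
      Integrable (fun μ : ℝ => ν₁ μ * ((ε / ((μ - lam)^2 + ε^2) : ℝ) : ℂ)) :=
    fun hε => kernel_bdd_mul ν₁ hν₁i lam hε
  have hK2 : ∀ {ε : ℝ}, 0 < ε →
      Integrable (fun μ : ℝ => ν₂ μ * ((ε / ((μ - lam)^2 + ε^2) : ℝ) : ℂ)) :=
    fun hε => kernel_bdd_mul ν₂ hν₂i lam hε
  have hsplit : ∀ {ε : ℝ}, 0 < ε →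
      (∫ μ : ℝ, ν μ * ((ε / ((μ - lam)^2 + ε^2) : ℝ) : ℂ))
        = (∫ μ : ℝ, ν₁ μ * ((ε / ((μ - lam)^2 + ε^2) : ℝ) : ℂ))
          + ∫ μ : ℝ, ν₂ μ * ((ε / ((μ - lam)^2 + ε^2) : ℝ) : ℂ) := by
    intro ε hε
    rw [← integral_add (hK1 hε) (hK2 hε)]
    congr 1; ext μ
    rw [← add_mul]
    congr 1
    have := congrFun (Set.indicator_self_add_compl s ν) μ
    simp only [Pi.add_apply] at this
    exact this.symm
  have hfar : Tendsto (fun ε : ℝ => ∫ μ : ℝ, ν₂ μ * ((ε / ((μ - lam)^2 + ε^2) : ℝ) : ℂ))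
      (𝓝[>] (0:ℝ)) (𝓝 0) := by
    apply squeeze_zero_norm' (a := fun ε : ℝ => ε * ∫ μ : ℝ, ‖ν μ‖)
    · filter_upwards [self_mem_nhdsWithin] with ε hε
      have hε : (0:ℝ) < ε := hε
      have hb : ∀ μ : ℝ, ‖ν₂ μ * ((ε / ((μ - lam)^2 + ε^2) : ℝ) : ℂ)‖ ≤ ε * ‖ν μ‖ := by
        intro μ
        by_cases hμ : μ ∈ s
        · have hz : ν₂ μ = 0 := by
            rw [hν₂, Set.indicator_of_notMem (Set.notMem_compl_iff.mpr hμ)]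
          rw [hz, zero_mul, norm_zero]
          positivity
        · rw [norm_mul, Complex.norm_real, Real.norm_eq_abs,
            _root_.abs_of_nonneg (show (0:ℝ) ≤ ε / ((μ - lam)^2 + ε^2) by positivity)]
          have h1 : (1:ℝ) ≤ (μ - lam)^2 := by
            simp only [hs, Set.mem_Icc, not_and_or, not_le] at hμ
            rcases hμ with h | h <;> nlinarith
          have h2 : ε / ((μ - lam)^2 + ε^2) ≤ ε := by
            rw [div_le_iff₀ (by positivity)]
            nlinarith
          have h3 : ‖ν₂ μ‖ ≤ ‖ν μ‖ :=
            le_of_eq (by rw [hν₂, Set.indicator_of_mem (show μ ∈ sᶜ from hμ)])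
          calc ‖ν₂ μ‖ * (ε / ((μ - lam)^2 + ε^2)) ≤ ‖ν μ‖ * ε :=
              mul_le_mul h3 h2 (by positivity) (norm_nonneg _)
          _ = ε * ‖ν μ‖ := mul_comm _ _
      calc ‖∫ μ : ℝ, ν₂ μ * ((ε / ((μ - lam)^2 + ε^2) : ℝ) : ℂ)‖
          ≤ ∫ μ : ℝ, ε * ‖ν μ‖ :=
            norm_integral_le_of_norm_le ((hint.norm).const_mul ε) (ae_of_all _ hb)
      _ = ε * ∫ μ : ℝ, ‖ν μ‖ := integral_const_mul _ _
    · have h0 : Tendsto (fun ε : ℝ => ε * ∫ μ : ℝ, ‖ν μ‖) (𝓝 (0:ℝ))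
          (𝓝 (0 * ∫ μ : ℝ, ‖ν μ‖)) := tendsto_id.mul_const _
      rw [zero_mul] at h0
      exact h0.mono_left nhdsWithin_le_nhds
  have hsub : ∀ {ε : ℝ}, 0 < ε →
      (∫ μ : ℝ, ν₁ μ * ((ε / ((μ - lam)^2 + ε^2) : ℝ) : ℂ))
        = ∫ t : ℝ, ν₁ (lam + ε * t) * (((1 + t^2)⁻¹ : ℝ) : ℂ) := by
    intro ε hε
    set g : ℝ → ℂ := fun u => ν₁ (lam + u) * ((ε / (u^2 + ε^2) : ℝ) : ℂ) with hg
    have h1 : (∫ u : ℝ, g u) = ∫ μ : ℝ, ν₁ μ * ((ε / ((μ - lam)^2 + ε^2) : ℝ) : ℂ) := by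
      rw [← integral_add_left_eq_self lam
        (f := fun μ : ℝ => ν₁ μ * ((ε / ((μ - lam)^2 + ε^2) : ℝ) : ℂ))]
      congr 1; funext u; simp [hg]
    have h2 : (∫ t : ℝ, g (ε * t)) = |ε⁻¹| • ∫ u : ℝ, g u := MeasureTheory.Measure.integral_comp_mul_left g ε
    have h3 : ∀ t : ℝ, g (ε * t) = ε⁻¹ • (ν₁ (lam + ε * t) * (((1 + t^2)⁻¹ : ℝ) : ℂ)) := by
      intro t
      have hc : (ε / ((ε * t)^2 + ε^2) : ℝ) = ε⁻¹ * (1 + t^2)⁻¹ := by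
        have hne : ((ε * t)^2 + ε^2 : ℝ) ≠ 0 := by positivity
        have h1t : ((1:ℝ) + t^2) ≠ 0 := by positivity
        field_simp
        ring
      simp only [hg, hc]
      push_cast
      rw [real_smul]
      push_cast
      ring
    simp only [h3] at h2
    rw [integral_smul, _root_.abs_of_pos (inv_pos.mpr hε), h1] at h2
    exact (smul_right_injective ℂ (inv_ne_zero hε.ne') h2).symm
  have hval : (∫ t : ℝ, ν lam * (((1 + t^2)⁻¹ : ℝ) : ℂ)) = (Real.pi : ℂ) * ν lam := by
    rw [integral_const_mul, show (∫ t : ℝ, (((1 + t^2)⁻¹ : ℝ) : ℂ)) = ((Real.pi : ℝ) : ℂ) by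
      rw [← integral_univ_inv_one_add_sq]; exact integral_ofReal, mul_comm]
  have hnear : Tendsto (fun ε : ℝ => ∫ t : ℝ, ν₁ (lam + ε * t) * (((1 + t^2)⁻¹ : ℝ) : ℂ))
      (𝓝[>] (0:ℝ)) (𝓝 ((Real.pi : ℂ) * ν lam)) := by
    rw [← hval]
    apply tendsto_integral_filter_of_dominated_convergence (fun t => M * (1 + t^2)⁻¹)
    · filter_upwards [self_mem_nhdsWithin] with ε hε
      have hm1 : Measurable fun t : ℝ => ν₁ (lam + ε * t) := hν₁m.comp (by fun_prop)
      exact (hm1.mul (by fun_prop)).aestronglyMeasurable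
    · filter_upwards [self_mem_nhdsWithin] with ε hε
      apply ae_of_all; intro t
      rw [norm_mul, Complex.norm_real, Real.norm_eq_abs,
        _root_.abs_of_nonneg (show (0:ℝ) ≤ (1 + t^2)⁻¹ by positivity)]
      exact mul_le_mul_of_nonneg_right (hM _) (by positivity)
    · exact integrable_inv_one_add_sq.const_mul M
    · apply ae_of_all; intro t
      apply Tendsto.mul_const
      have hteq : (fun ε : ℝ => ν₁ (lam + ε * t)) =ᶠ[𝓝[>] (0:ℝ)] (fun ε : ℝ => ν (lam + ε * t)) := by
        filter_upwards [Ioo_mem_nhdsGT_of_mem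
          (show (0:ℝ) ∈ Set.Ico (0:ℝ) (1 + |t|)⁻¹ from ⟨le_refl (0:ℝ), by positivity⟩)] with ε hε
        apply Set.indicator_of_mem
        have habs : |ε * t| < 1 := by
          rw [abs_mul, _root_.abs_of_pos hε.1]
          have h2 : ε * (1 + |t|) < 1 := by
            calc ε * (1 + |t|) < (1 + |t|)⁻¹ * (1 + |t|) :=
                mul_lt_mul_of_pos_right hε.2 (by positivity)
            _ = 1 := inv_mul_cancel₀ (by positivity)
          nlinarith [abs_nonneg t]
        obtain ⟨ha, hb⟩ := abs_le.mp habs.le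
        simp only [hs, Set.mem_Icc]
        constructor <;> linarith
      have hcv : Tendsto (fun ε : ℝ => ν (lam + ε * t)) (𝓝[>] (0:ℝ)) (𝓝 (ν lam)) := by
        have ht : Tendsto (fun ε : ℝ => lam + ε * t) (𝓝[>] (0:ℝ)) (𝓝 lam) := by
          have := (((tendsto_id (x := 𝓝 (0:ℝ))).mul_const t).const_add lam).mono_left
            (nhdsWithin_le_nhds (s := Set.Ioi (0:ℝ)))
          simpa using this
        exact (hcont.tendsto lam).comp ht
      exact Tendsto.congr' hteq.symm hcv
  have hlim1 : Tendsto (fun ε : ℝ => ∫ μ : ℝ, ν₁ μ * ((ε / ((μ - lam)^2 + ε^2) : ℝ) : ℂ))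
      (𝓝[>] (0:ℝ)) (𝓝 ((Real.pi : ℂ) * ν lam)) := by
    apply Tendsto.congr' _ hnear
    filter_upwards [self_mem_nhdsWithin] with ε hε
    exact (hsub hε).symm
  have hfinal := hlim1.add hfar
  rw [add_zero] at hfinal
  apply Tendsto.congr' _ hfinal
  filter_upwards [self_mem_nhdsWithin] with ε hε
  exact (hsplit hε).symm

theorem plemelj_jump (ν : ℝ → ℂ) (hcont : Continuous ν) (hint : Integrable ν)
    (U : Set ℂ) (hU : IsOpen U) (hUR : ∀ x : ℝ, (x : ℂ) ∈ U)
    (N : ℂ → ℂ) (hN : DifferentiableOn ℂ N U)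
    (hNν : ∀ x : ℝ, N x = ν x)
    (α : ℂ → ℂ)
    (hα : ∀ lam : ℂ, lam.im ≠ 0 →
      α lam = Complex.exp (∫ μ : ℝ, ν μ / (μ - lam)))
    (αp αm : ℝ → ℂ) (hαp : Continuous αp) (hαm : Continuous αm)
    (hplus : ∀ lam : ℝ,
      Tendsto (fun ε : ℝ => α (lam + Complex.I * ε)) (𝓝[>] 0) (𝓝 (αp lam)))
    (hminus : ∀ lam : ℝ,
      Tendsto (fun ε : ℝ => α (lam - Complex.I * ε)) (𝓝[>] 0) (𝓝 (αm lam))) :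
    ∀ lam : ℝ, αm lam = αp lam * Complex.exp (-2 * Real.pi * Complex.I * ν lam) := by
  intro lam
  set J : ℝ → ℂ := fun ε => ∫ μ : ℝ, ν μ * ((ε / ((μ - lam)^2 + ε^2) : ℝ) : ℂ) with hJ
  have key : Tendsto J (𝓝[>] (0:ℝ)) (𝓝 ((Real.pi : ℂ) * ν lam)) :=
    poisson_limit ν hcont hint lam
  have heq : ∀ᶠ (ε : ℝ) in 𝓝[>] (0:ℝ),
      α ((lam:ℂ) - Complex.I * (ε:ℂ))
        = α ((lam:ℂ) + Complex.I * (ε:ℂ)) * Complex.exp ((-2) * Complex.I * J ε) := by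
    filter_upwards [self_mem_nhdsWithin] with ε hεm
    have hε : (0:ℝ) < ε := hεm
    have him1 : ((lam:ℂ) + Complex.I * ε).im ≠ 0 := by simp [hε.ne']
    have him2 : ((lam:ℂ) - Complex.I * ε).im ≠ 0 := by simp [hε.ne']
    rw [hα _ him1, hα _ him2, ← Complex.exp_add]
    congr 1
    have hint1 := integrable_div_sub ν hcont hint _ him1
    have hint2 := integrable_div_sub ν hcont hint _ him2
    have hintJ := kernel_bdd_mul ν hint lam hε
    have hpt : ∀ μ : ℝ, ν μ / ((μ:ℂ) - ((lam:ℂ) - Complex.I * ε))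
        = ν μ / ((μ:ℂ) - ((lam:ℂ) + Complex.I * ε))
          + (-2) * Complex.I * (ν μ * ((ε / ((μ - lam)^2 + ε^2) : ℝ) : ℂ)) := by
      intro μ
      have hd1 : ((μ:ℂ) - ((lam:ℂ) + Complex.I * ε)) ≠ 0 := by
        intro h
        have := congrArg Complex.im h
        simp at this
        exact hε.ne' this
      have hd2 : ((μ:ℂ) - ((lam:ℂ) - Complex.I * ε)) ≠ 0 := by
        intro h
        have := congrArg Complex.im h
        simp at this
        exact hε.ne' this
      have hd3 : (((μ - lam)^2 + ε^2 : ℝ) : ℂ) ≠ 0 := by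
        exact_mod_cast ne_of_gt (show (0:ℝ) < (μ - lam)^2 + ε^2 by positivity)
      push_cast at hd3 ⊢
      field_simp
      linear_combination (-2 * ν μ * Complex.I * (ε:ℂ)^3) * Complex.I_sq
    simp only [hpt]
    rw [integral_add hint1 (hintJ.const_mul ((-2) * Complex.I)), integral_const_mul]
  have h2 : Tendsto (fun ε : ℝ => α ((lam:ℂ) + Complex.I * (ε:ℂ))
        * Complex.exp ((-2) * Complex.I * J ε)) (𝓝[>] (0:ℝ))
      (𝓝 (αp lam * Complex.exp (-2 * Real.pi * Complex.I * ν lam))) := by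
    apply (hplus lam).mul
    have hc : Tendsto (fun ε : ℝ => (-2) * Complex.I * J ε) (𝓝[>] (0:ℝ))
        (𝓝 ((-2) * Complex.I * ((Real.pi : ℂ) * ν lam))) := key.const_mul _
    have hcomp := (Complex.continuous_exp.tendsto _).comp hc
    convert hcomp using 2
    · rfl
    · congr 1; ring
  exact tendsto_nhds_unique (hminus lam) (Tendsto.congr' (EventuallyEq.symm heq) h2)
end
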